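/- Fix x1, x2 ∈ [0,1] (positive-subtraction gadget). Consider the financial system with banks {s1, s2, v1, v2, w1, u1, v7, v8, w2, o, t}, external assets e s1 = x1, e s2 = x2, e w1 = e w2 = 1, all others 0; debt contracts of notional 1: s1→v1, v1→v2, u1→v7, s2→v7, v7→v8, o→t; and CDSes of notional 1: (debtor w1, creditor u1, reference v1) and (debtor w2, creditor o, reference v7). Then every clearing vector r of this system satisfies r o = max (x1 − x2) 0. -/

import Mathlib

open Finset

/-- The liability of bank `i` to bank `j` under recovery-rate vector `r`. -/
def liab {n : ℕ} (c : Fin n → Fin n → ℝ) (cds : Fin n → Fin n → Fin n → ℝ)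
    (r : Fin n → ℝ) (i j : Fin n) : ℝ :=
  c i j + ∑ R : Fin n, (1 - r R) * cds i j R

/-- The total liability of bank `i` under recovery-rate vector `r`. -/
def totLiab {n : ℕ} (c : Fin n → Fin n → ℝ) (cds : Fin n → Fin n → Fin n → ℝ)
    (r : Fin n → ℝ) (i : Fin n) : ℝ :=
  ∑ j : Fin n, liab c cds r i j

/-- The assets of bank `i` under recovery-rate vector `r`
(external assets plus incoming payments `p j i r = r j * liab c cds r j i`). -/
def assets {n : ℕ} (e : Fin n → ℝ) (c : Fin n → Fin n → ℝ)
    (cds : Fin n → Fin n → Fin n → ℝ) (r : Fin n → ℝ) (i : Fin n) : ℝ :=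
  e i + ∑ j : Fin n, r j * liab c cds r j i

/-- `r` is a clearing recovery-rate vector. -/
def IsClearing {n : ℕ} (e : Fin n → ℝ) (c : Fin n → Fin n → ℝ)
    (cds : Fin n → Fin n → Fin n → ℝ) (r : Fin n → ℝ) : Prop :=
  (∀ i, 0 ≤ r i ∧ r i ≤ 1) ∧
  ∀ i, (0 < totLiab c cds r i →
          r i = min 1 (assets e c cds r i / totLiab c cds r i)) ∧
       (totLiab c cds r i = 0 → r i = 1)

/-- `(e, c, cds)` is a financial system. -/
def IsFinSys {n : ℕ} (e : Fin n → ℝ) (c : Fin n → Fin n → ℝ)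
    (cds : Fin n → Fin n → Fin n → ℝ) : Prop :=
  (∀ i, 0 ≤ e i) ∧ (∀ i j, 0 ≤ c i j) ∧ (∀ i, c i i = 0) ∧
  (∀ i j R, 0 ≤ cds i j R) ∧
  (∀ i j R, ¬(i ≠ j ∧ i ≠ R ∧ j ≠ R) → cds i j R = 0)

lemma sum11 {M : Type*} [AddCommMonoid M] (f : Fin 11 → M) :
    ∑ i, f i = f 0 + f 1 + f 2 + f 3 + f 4 + f 5 + f 6 + f 7 + f 8 + f 9 + f 10 := by
  simp [Fin.sum_univ_succ, add_assoc]

/-- Positive-subtraction gadget: banks `s1=0, s2=1, v1=2, v2=3, w1=4, u1=5, v7=6, v8=7,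
w2=8, o=9, t=10`; external assets `x1` at `s1`, `x2` at `s2`, `1` at `w1` and `w2`;
unit debt contracts `s1→v1`, `v1→v2`, `u1→v7`, `s2→v7`, `v7→v8`, `o→t`; unit CDSes
`(w1, u1, v1)` and `(w2, o, v7)`.  Every clearing vector has `r o = max (x1 - x2) 0`. -/
theorem positive_subtraction_gadget (x1 x2 : ℝ) (hx1 : 0 ≤ x1) (hx1' : x1 ≤ 1)
    (hx2 : 0 ≤ x2) (hx2' : x2 ≤ 1) :
    ∀ r : Fin 11 → ℝ,
      IsClearing
        (fun i => if i = 0 then x1 else if i = 1 then x2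
                  else if i = 4 ∨ i = 8 then 1 else 0)
        (fun i j =>
          if (i = 0 ∧ j = 2) ∨ (i = 2 ∧ j = 3) ∨ (i = 5 ∧ j = 6) ∨ (i = 1 ∧ j = 6) ∨
             (i = 6 ∧ j = 7) ∨ (i = 9 ∧ j = 10) then 1 else 0)
        (fun i j R =>
          if (i = 4 ∧ j = 5 ∧ R = 2) ∨ (i = 8 ∧ j = 9 ∧ R = 6) then 1 else 0) r →
      r 9 = max (x1 - x2) 0 := by
  intro r hr
  set e : Fin 11 → ℝ := (fun i => if i = 0 then x1 else if i = 1 then x2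
                  else if i = 4 ∨ i = 8 then 1 else 0) with he
  set c : Fin 11 → Fin 11 → ℝ := (fun i j =>
          if (i = 0 ∧ j = 2) ∨ (i = 2 ∧ j = 3) ∨ (i = 5 ∧ j = 6) ∨ (i = 1 ∧ j = 6) ∨
             (i = 6 ∧ j = 7) ∨ (i = 9 ∧ j = 10) then 1 else 0) with hc
  set cds : Fin 11 → Fin 11 → Fin 11 → ℝ := (fun i j R =>
          if (i = 4 ∧ j = 5 ∧ R = 2) ∨ (i = 8 ∧ j = 9 ∧ R = 6) then 1 else 0) with hcds
  obtain ⟨hbd, hcl⟩ := hr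
  -- bank 0 (s1)
  have hT0 : totLiab c cds r 0 = 1 := by
    simp [totLiab, liab, sum11, hc, hcds]
  have hA0 : assets e c cds r 0 = x1 := by
    simp [assets, liab, sum11, hc, hcds, he]
  have h0 : r 0 = x1 := by
    have h := (hcl 0).1 (by rw [hT0]; norm_num)
    rw [hT0, hA0, div_one, min_eq_right hx1'] at h
    exact h
  -- bank 2 (v1)
  have hT2 : totLiab c cds r 2 = 1 := by
    simp [totLiab, liab, sum11, hc, hcds]
  have hA2 : assets e c cds r 2 = x1 := by
    simp [assets, liab, sum11, hc, hcds, he, h0]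
  have h2 : r 2 = x1 := by
    have h := (hcl 2).1 (by rw [hT2]; norm_num)
    rw [hT2, hA2, div_one, min_eq_right hx1'] at h
    exact h
  -- bank 4 (w1)
  have hT4 : totLiab c cds r 4 = 1 - x1 := by
    simp [totLiab, liab, sum11, hc, hcds, h2]
  have hA4 : assets e c cds r 4 = 1 := by
    simp [assets, liab, sum11, hc, hcds, he]
  have h4 : r 4 = 1 := by
    rcases eq_or_lt_of_le hx1' with h | h
    · exact (hcl 4).2 (by rw [hT4, ← h]; ring)
    · have hpos : 0 < 1 - x1 := by linarith
      have hh := (hcl 4).1 (by rw [hT4]; exact hpos)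
      rw [hT4, hA4, min_eq_left (by rw [le_div_iff₀ hpos]; linarith)] at hh
      exact hh
  -- bank 5 (u1)
  have hT5 : totLiab c cds r 5 = 1 := by
    simp [totLiab, liab, sum11, hc, hcds]
  have hA5 : assets e c cds r 5 = 1 - x1 := by
    simp [assets, liab, sum11, hc, hcds, he, h4, h2]
  have h5 : r 5 = 1 - x1 := by
    have h := (hcl 5).1 (by rw [hT5]; norm_num)
    rw [hT5, hA5, div_one, min_eq_right (by linarith)] at h
    exact h
  -- bank 1 (s2)
  have hT1 : totLiab c cds r 1 = 1 := by
    simp [totLiab, liab, sum11, hc, hcds]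
  have hA1 : assets e c cds r 1 = x2 := by
    simp [assets, liab, sum11, hc, hcds, he]
  have h1 : r 1 = x2 := by
    have h := (hcl 1).1 (by rw [hT1]; norm_num)
    rw [hT1, hA1, div_one, min_eq_right hx2'] at h
    exact h
  -- bank 6 (v7)
  have hT6 : totLiab c cds r 6 = 1 := by
    simp [totLiab, liab, sum11, hc, hcds]
  have hA6 : assets e c cds r 6 = 1 - x1 + x2 := by
    simp [assets, liab, sum11, hc, hcds, he, h5, h1]
    ring
  have h6 : r 6 = min 1 (1 - x1 + x2) := by
    have h := (hcl 6).1 (by rw [hT6]; norm_num)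
    rw [hT6, hA6, div_one] at h
    exact h
  -- bank 8 (w2)
  have hT8 : totLiab c cds r 8 = 1 - r 6 := by
    simp [totLiab, liab, sum11, hc, hcds]
  have hA8 : assets e c cds r 8 = 1 := by
    simp [assets, liab, sum11, hc, hcds, he]
  have hr6le : r 6 ≤ 1 := (hbd 6).2
  have h8 : r 8 = 1 := by
    rcases eq_or_lt_of_le hr6le with h | h
    · exact (hcl 8).2 (by rw [hT8, h]; ring)
    · have hpos : 0 < 1 - r 6 := by linarith
      have hh := (hcl 8).1 (by rw [hT8]; exact hpos)
      rw [hT8, hA8, min_eq_left (by rw [le_div_iff₀ hpos]; linarith [(hbd 6).1])] at hh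
      exact hh
  -- bank 9 (o)
  have hT9 : totLiab c cds r 9 = 1 := by
    simp [totLiab, liab, sum11, hc, hcds]
  have hA9 : assets e c cds r 9 = max (x1 - x2) 0 := by
    have : r 8 * (1 - r 6) = max (x1 - x2) 0 := by
      rw [h8, h6, one_mul]
      rcases le_total (1 - x1 + x2) 1 with h | h
      · rw [min_eq_right h, max_eq_left (by linarith)]; ring
      · rw [min_eq_left h, max_eq_right (by linarith)]; ring
    rw [← this]
    simp [assets, liab, sum11, hc, hcds, he]
  have h := (hcl 9).1 (by rw [hT9]; norm_num)
  rw [hT9, hA9, div_one, min_eq_right (by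
    apply max_le (by linarith) (by norm_num))] at h
  exact h
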